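/- Let α be a natural number and R > 0. For all x, y in [-R,R], (1/(4R)) ∫_{-R}^{R} (x-b)_+^α (y-b)_+^α db + (1/(4R)) ∫_{-R}^{R} (b-x)_+^α (b-y)_+^α db = (1/(4R)) ∫_{-R}^{R} (x-b)^α (y-b)^α db + c_α |x-y|^{2α+1}/R, where c_α = (-1)^{α+1} (α!)²/(4·(2α+1)!). -/

import Mathlib

open MeasureTheory intervalIntegral
set_option maxHeartbeats 1000000

/-- Truncated power `(u)_+^α`, with the convention `(u)_+^0 = 1_{u>0}`. -/
noncomputable def truncPow (α : ℕ) (u : ℝ) : ℝ := if 0 < u then u ^ α else 0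

lemma truncPow_measurable (α : ℕ) : Measurable (truncPow α) :=
  Measurable.ite (measurableSet_lt measurable_const measurable_id)
    (measurable_id.pow_const α) measurable_const

lemma truncPow_abs_le (α : ℕ) (u : ℝ) : |truncPow α u| ≤ |u| ^ α := by
  unfold truncPow
  split_ifs with h
  · rw [abs_pow]
  · simp only [abs_zero]; positivity

lemma trunc_ii (α : ℕ) (x y c d : ℝ) :
    IntervalIntegrable (fun b => truncPow α (x - b) * truncPow α (y - b)) volume c d := by
  apply IntervalIntegrable.mono_fun' (g := fun b => |x - b| ^ α * |y - b| ^ α)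
  · exact (((continuous_const.sub continuous_id).abs.pow α).mul
      ((continuous_const.sub continuous_id).abs.pow α)).intervalIntegrable c d
  · exact (((truncPow_measurable α).comp (measurable_const.sub measurable_id)).mul
      ((truncPow_measurable α).comp (measurable_const.sub measurable_id))).aestronglyMeasurable
  · refine Filter.Eventually.of_forall fun b => ?_
    simp only [Real.norm_eq_abs, abs_mul]
    exact mul_le_mul (truncPow_abs_le _ _) (truncPow_abs_le _ _) (abs_nonneg _) (by positivity)

lemma trunc_ii' (α : ℕ) (x y c d : ℝ) :
    IntervalIntegrable (fun b => truncPow α (b - x) * truncPow α (b - y)) volume c d := by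
  apply IntervalIntegrable.mono_fun' (g := fun b => |b - x| ^ α * |b - y| ^ α)
  · exact (((continuous_id.sub continuous_const).abs.pow α).mul
      ((continuous_id.sub continuous_const).abs.pow α)).intervalIntegrable c d
  · exact (((truncPow_measurable α).comp (measurable_id.sub measurable_const)).mul
      ((truncPow_measurable α).comp (measurable_id.sub measurable_const))).aestronglyMeasurable
  · refine Filter.Eventually.of_forall fun b => ?_
    simp only [Real.norm_eq_abs, abs_mul]
    exact mul_le_mul (truncPow_abs_le _ _) (truncPow_abs_le _ _) (abs_nonneg _) (by positivity)

lemma beta_nat (a b : ℝ) : ∀ (n m : ℕ),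
    (∫ t in a..b, (t - a) ^ m * (b - t) ^ n)
      = (m.factorial : ℝ) * n.factorial / (m + n + 1).factorial * (b - a) ^ (m + n + 1) := by
  intro n
  induction n with
  | zero =>
    intro m
    simp only [pow_zero, mul_one, Nat.factorial_zero, Nat.cast_one, add_zero]
    have hm : ((m : ℝ) + 1) ≠ 0 := by positivity
    have hF : ∀ t ∈ Set.uIcc a b,
        HasDerivAt (fun t => (t - a) ^ (m + 1) / ((m : ℝ) + 1)) ((t - a) ^ m) t := by
      intro t _
      have h := (((hasDerivAt_id t).sub_const a).pow (m + 1)).div_const ((m : ℝ) + 1)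
      convert h using 1
      · rfl
      · rfl
      · rfl
      · push_cast; simp only [id]; field_simp
    have hv' : IntervalIntegrable (fun t => (t - a) ^ m) volume a b :=
      ((continuous_id.sub continuous_const).pow m).intervalIntegrable a b
    rw [integral_eq_sub_of_hasDerivAt hF hv', sub_self, zero_pow (Nat.succ_ne_zero m),
      Nat.factorial_succ]
    push_cast
    field_simp
    ring
  | succ n IH =>
    intro m
    have hu : ∀ t ∈ Set.uIcc a b,
        HasDerivAt (fun t => (b - t) ^ (n + 1)) (-((n + 1 : ℝ) * (b - t) ^ n)) t := by
      intro t _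
      have h := ((hasDerivAt_id t).const_sub b).pow (n + 1)
      simpa [Pi.pow_def] using h
    have hv : ∀ t ∈ Set.uIcc a b,
        HasDerivAt (fun t => (t - a) ^ (m + 1) / ((m : ℝ) + 1)) ((t - a) ^ m) t := by
      intro t _
      have h := (((hasDerivAt_id t).sub_const a).pow (m + 1)).div_const ((m : ℝ) + 1)
      have hm : ((m : ℝ) + 1) ≠ 0 := by positivity
      convert h using 1
      · rfl
      · rfl
      · rfl
      · push_cast; simp only [id]; field_simp
    have hu' : IntervalIntegrable (fun t => -((n + 1 : ℝ) * (b - t) ^ n)) volume a b :=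
      ((continuous_const.mul ((continuous_const.sub continuous_id).pow n)).neg).intervalIntegrable a b
    have hv' : IntervalIntegrable (fun t => (t - a) ^ m) volume a b :=
      ((continuous_id.sub continuous_const).pow m).intervalIntegrable a b
    have ibp := integral_mul_deriv_eq_deriv_mul hu hv hu' hv'
    have hrw : (fun t => -((n + 1 : ℝ) * (b - t) ^ n) * ((t - a) ^ (m + 1) / ((m : ℝ) + 1)))
        = fun t => (-((n + 1 : ℝ) / ((m : ℝ) + 1))) * ((t - a) ^ (m + 1) * (b - t) ^ n) := by
      funext t
      have hm : ((m : ℝ) + 1) ≠ 0 := by positivity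
      field_simp
    rw [hrw, intervalIntegral.integral_const_mul, IH (m + 1)] at ibp
    have hcomm : (∫ t in a..b, (t - a) ^ m * (b - t) ^ (n + 1))
        = ∫ t in a..b, (b - t) ^ (n + 1) * (t - a) ^ m :=
      integral_congr fun t _ => mul_comm _ _
    rw [hcomm, ibp]
    rw [show m + (n + 1) + 1 = m + 1 + n + 1 from by ring]
    have hm : ((m : ℝ) + 1) ≠ 0 := by positivity
    have hK : ((m + 1 + n + 1).factorial : ℝ) ≠ 0 :=
      Nat.cast_ne_zero.2 (Nat.factorial_ne_zero _)
    simp only [sub_self, zero_pow (Nat.succ_ne_zero n), zero_pow (Nat.succ_ne_zero m),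
      zero_mul, mul_zero, zero_div, sub_zero, zero_sub]
    rw [Nat.factorial_succ m, Nat.factorial_succ n]
    push_cast
    field_simp


lemma key_lemma (α : ℕ) (R x y : ℝ) (hR : 0 < R)
    (hx : x ∈ Set.Icc (-R) R) (hy : y ∈ Set.Icc (-R) R) (hxy : x ≤ y) :
    (1 / (4 * R)) * (∫ b in (-R)..R, truncPow α (x - b) * truncPow α (y - b))
      + (1 / (4 * R)) * (∫ b in (-R)..R, truncPow α (b - x) * truncPow α (b - y))
    = (1 / (4 * R)) * (∫ b in (-R)..R, (x - b) ^ α * (y - b) ^ α)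
      + ((-1 : ℝ) ^ (α + 1) * (Nat.factorial α : ℝ) ^ 2
          / (4 * (Nat.factorial (2 * α + 1) : ℝ)))
        * |x - y| ^ (2 * α + 1) / R := by
  obtain ⟨hx1, hx2⟩ := hx
  obtain ⟨hy1, hy2⟩ := hy
  have hfc : Continuous (fun b : ℝ => (x - b) ^ α * (y - b) ^ α) :=
    ((continuous_const.sub continuous_id).pow α).mul ((continuous_const.sub continuous_id).pow α)
  have hfint : ∀ c d : ℝ, IntervalIntegrable (fun b : ℝ => (x - b) ^ α * (y - b) ^ α) volume c d :=
    fun c d => hfc.intervalIntegrable c d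
  have hne : ∀ᵐ b : ℝ, b ≠ x := by
    have h0 : volume ({x} : Set ℝ) = 0 := measure_singleton x
    simpa [ae_iff] using h0
  -- first truncated integral
  have h1 : (∫ b in (-R)..R, truncPow α (x - b) * truncPow α (y - b))
      = ∫ b in (-R)..x, (x - b) ^ α * (y - b) ^ α := by
    rw [← integral_add_adjacent_intervals (trunc_ii α x y (-R) x) (trunc_ii α x y x R)]
    have hA : (∫ b in x..R, truncPow α (x - b) * truncPow α (y - b)) = 0 := by
      have : ∀ b ∈ Set.uIcc x R, truncPow α (x - b) * truncPow α (y - b) = (0:ℝ) := by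
        intro b hb
        rw [Set.uIcc_of_le hx2] at hb
        have : ¬ (0 < x - b) := by simp only [not_lt]; linarith [hb.1]
        simp [truncPow, this]
      rw [integral_congr this, intervalIntegral.integral_zero]
    have hB : (∫ b in (-R)..x, truncPow α (x - b) * truncPow α (y - b))
        = ∫ b in (-R)..x, (x - b) ^ α * (y - b) ^ α := by
      apply intervalIntegral.integral_congr_ae
      filter_upwards [hne] with b hbne hb
      rw [Set.uIoc_of_le (by linarith : -R ≤ x)] at hb
      have hbx : b < x := lt_of_le_of_ne hb.2 hbne
      have hp1 : 0 < x - b := by linarith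
      have hp2 : 0 < y - b := by linarith
      simp [truncPow, hp1, hp2]
    rw [hA, hB, add_zero]
  -- second truncated integral
  have h2 : (∫ b in (-R)..R, truncPow α (b - x) * truncPow α (b - y))
      = ∫ b in y..R, (x - b) ^ α * (y - b) ^ α := by
    rw [← integral_add_adjacent_intervals (trunc_ii' α x y (-R) y) (trunc_ii' α x y y R)]
    have hA : (∫ b in (-R)..y, truncPow α (b - x) * truncPow α (b - y)) = 0 := by
      have : ∀ b ∈ Set.uIcc (-R) y, truncPow α (b - x) * truncPow α (b - y) = (0:ℝ) := by
        intro b hb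
        rw [Set.uIcc_of_le (by linarith : -R ≤ y)] at hb
        have : ¬ (0 < b - y) := by simp only [not_lt]; linarith [hb.2]
        simp [truncPow, this]
      rw [integral_congr this, intervalIntegral.integral_zero]
    have hB : (∫ b in y..R, truncPow α (b - x) * truncPow α (b - y))
        = ∫ b in y..R, (x - b) ^ α * (y - b) ^ α := by
      apply intervalIntegral.integral_congr_ae
      refine Filter.Eventually.of_forall fun b hb => ?_
      rw [Set.uIoc_of_le hy2] at hb
      have hp2 : 0 < b - y := by linarith [hb.1]
      have hp1 : 0 < b - x := by linarith
      have : (b - x) ^ α * (b - y) ^ α = (x - b) ^ α * (y - b) ^ α := by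
        rw [← mul_pow, ← mul_pow]
        congr 1
        ring
      simp [truncPow, hp1, hp2, this]
    rw [hA, hB, zero_add]
  -- decomposition of the polynomial integral
  have hdec : (∫ b in (-R)..x, (x - b) ^ α * (y - b) ^ α)
        + (∫ b in y..R, (x - b) ^ α * (y - b) ^ α)
      = (∫ b in (-R)..R, (x - b) ^ α * (y - b) ^ α)
        - ∫ b in x..y, (x - b) ^ α * (y - b) ^ α := by
    have d1 := integral_add_adjacent_intervals (hfint (-R) x) (hfint x y)
    have d2 := integral_add_adjacent_intervals (hfint (-R) y) (hfint y R)
    linarith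
  -- value of the middle integral
  have hmid : (∫ b in x..y, (x - b) ^ α * (y - b) ^ α)
      = (-1:ℝ) ^ α * ((α.factorial : ℝ) * α.factorial / (α + α + 1).factorial)
        * (y - x) ^ (α + α + 1) := by
    have hc : (∫ b in x..y, (x - b) ^ α * (y - b) ^ α)
        = (-1:ℝ) ^ α * ∫ b in x..y, (b - x) ^ α * (y - b) ^ α := by
      rw [← intervalIntegral.integral_const_mul]
      refine integral_congr fun b _ => ?_
      have h : (x - b) ^ α = (-1:ℝ) ^ α * (b - x) ^ α := by
        rw [← mul_pow]
        congr 1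
        ring
      rw [h]
      ring
    rw [hc, beta_nat]
    ring
  have habs : |x - y| = y - x := by
    rw [abs_sub_comm]
    exact abs_of_nonneg (by linarith)
  have hfa : ((α + α + 1).factorial : ℝ) ≠ 0 := Nat.cast_ne_zero.2 (Nat.factorial_ne_zero _)
  have hR' : R ≠ 0 := ne_of_gt hR
  rw [h1, h2, habs, two_mul]
  have main := hdec
  rw [hmid] at main
  linear_combination (1 / (4 * R)) * main

/-- For `x, y ∈ [-R, R]`:
`(1/(4R)) ∫_{-R}^R (x-b)_+^α (y-b)_+^α db + (1/(4R)) ∫_{-R}^R (b-x)_+^α (b-y)_+^α db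
  = (1/(4R)) ∫_{-R}^R (x-b)^α (y-b)^α db + c_α |x-y|^{2α+1} / R`,
with `c_α = (-1)^{α+1} (α!)² / (4 (2α+1)!)`. -/
theorem stmt3 (α : ℕ) (R x y : ℝ) (hR : 0 < R)
    (hx : x ∈ Set.Icc (-R) R) (hy : y ∈ Set.Icc (-R) R) :
    (1 / (4 * R)) * (∫ b in (-R)..R, truncPow α (x - b) * truncPow α (y - b))
      + (1 / (4 * R)) * (∫ b in (-R)..R, truncPow α (b - x) * truncPow α (b - y))
    = (1 / (4 * R)) * (∫ b in (-R)..R, (x - b) ^ α * (y - b) ^ α)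
      + ((-1 : ℝ) ^ (α + 1) * (Nat.factorial α : ℝ) ^ 2
          / (4 * (Nat.factorial (2 * α + 1) : ℝ)))
        * |x - y| ^ (2 * α + 1) / R := by
  rcases le_total x y with h | h
  · exact key_lemma α R x y hR hx hy h
  · have H := key_lemma α R y x hR hy hx h
    have e1 : (∫ b in (-R)..R, truncPow α (x - b) * truncPow α (y - b))
        = ∫ b in (-R)..R, truncPow α (y - b) * truncPow α (x - b) :=
      integral_congr fun b _ => mul_comm _ _
    have e2 : (∫ b in (-R)..R, truncPow α (b - x) * truncPow α (b - y))
        = ∫ b in (-R)..R, truncPow α (b - y) * truncPow α (b - x) :=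
      integral_congr fun b _ => mul_comm _ _
    have e3 : (∫ b in (-R)..R, (x - b) ^ α * (y - b) ^ α)
        = ∫ b in (-R)..R, (y - b) ^ α * (x - b) ^ α :=
      integral_congr fun b _ => mul_comm _ _
    rw [e1, e2, e3, abs_sub_comm]
    exact H
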